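/- Let n ≥ 1, let a : Fin n → ℝ satisfy a i > 0 for all i, and let λ ∈ ℝ satisfy λ < a i for all i. Define the linear map T on EuclideanSpace ℝ (Fin n) coordinatewise by (T x) i = Real.sqrt ((a i - λ) / a i) * x i. If x and y lie on the ellipsoid E, i.e. ∑ i, (x i)^2 / a i = 1 and ∑ i, (y i)^2 / a i = 1, then ‖x - T y‖ = ‖T x - y‖. (Ivory's Lemma: for two confocal ellipsoids E and T(E) and corresponding pairs of points x, T x and y, T y, the two 'diagonal' distances are equal.) -/
import Mathlib


/-- **Ivory's Lemma** (Euclidean version): if `T` is the diagonal linear map with entries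
`√((a i - λ)/a i)` taking the ellipsoid `E = {x | ∑ i, (x i)^2 / a i = 1}` to the confocal
ellipsoid `E_λ`, and `x, y ∈ E`, then `‖x - T y‖ = ‖T x - y‖`. -/
theorem ivory_lemma_euclidean (n : ℕ) (hn : 1 ≤ n) (a : Fin n → ℝ) (ha : ∀ i, 0 < a i)
    (lam : ℝ) (hlam : ∀ i, lam < a i)
    (T : EuclideanSpace ℝ (Fin n) →ₗ[ℝ] EuclideanSpace ℝ (Fin n))
    (hT : ∀ (x : EuclideanSpace ℝ (Fin n)) (i : Fin n),
      T x i = Real.sqrt ((a i - lam) / a i) * x i)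
    (x y : EuclideanSpace ℝ (Fin n))
    (hx : ∑ i, (x i) ^ 2 / a i = 1) (hy : ∑ i, (y i) ^ 2 / a i = 1) :
    ‖x - T y‖ = ‖T x - y‖ := by
  set c : Fin n → ℝ := fun i => Real.sqrt ((a i - lam) / a i) with hc
  have hc2 : ∀ i, (c i) ^ 2 = (a i - lam) / a i := by
    intro i
    exact Real.sq_sqrt (div_nonneg (by linarith [hlam i]) (ha i).le)
  rw [EuclideanSpace.norm_eq, EuclideanSpace.norm_eq]
  congr 1
  have key : ∑ i, (x i - T y i) ^ 2 = ∑ i, (T x i - y i) ^ 2 := by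
    have h1 : ∀ i, (x i - T y i) ^ 2 - (T x i - y i) ^ 2
        = lam * ((x i) ^ 2 / a i) - lam * ((y i) ^ 2 / a i) := by
      intro i
      rw [hT, hT]
      have hs : (Real.sqrt ((a i - lam) / a i)) ^ 2 = 1 - lam / a i := by
        rw [Real.sq_sqrt (div_nonneg (by linarith [hlam i]) (ha i).le)]
        have hai := (ha i).ne'
        field_simp
      linear_combination ((y i) ^ 2 - (x i) ^ 2) * hs
    have : ∑ i, ((x i - T y i) ^ 2 - (T x i - y i) ^ 2)
        = ∑ i, (lam * ((x i) ^ 2 / a i) - lam * ((y i) ^ 2 / a i)) :=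
      Finset.sum_congr rfl (fun i _ => h1 i)
    rw [Finset.sum_sub_distrib] at this
    have h2 : ∑ i, (lam * ((x i) ^ 2 / a i) - lam * ((y i) ^ 2 / a i)) = 0 := by
      rw [Finset.sum_sub_distrib, ← Finset.mul_sum, ← Finset.mul_sum, hx, hy]; ring
    linarith [this, h2]
  simp only [Real.norm_eq_abs, sq_abs]
  exact key
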